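/- Let m ∈ ℝ, σ > 0, ς ∈ (0,1) and ε ≥ 0. Define the Gaussian membership function μ(x) = exp(−(x − m)²/(2σ²)) and the selected membership function μ⁺(x) = (μ(x) + ε)/((1 − ς)·μ(x) + ς + ε). Then μ⁺(m) = 1, and for every x ≠ m one has μ⁺(x) < 1; that is, μ⁺ attains its unique global maximum, with value 1, at the center m of the original Gaussian fuzzy set. -/

import Mathlib

/-- UNFIS Lemma 2 (Gaussian case): for a Gaussian membership function
`μ(x) = exp(−(x−m)²/(2σ²))` with center `m` and width `σ > 0`, and the
selected membership function `μ⁺(x) = (μ(x)+ε)/((1−ς)·μ(x)+ς+ε)` with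
`ς ∈ (0,1)` and `ε ≥ 0`, the function `μ⁺` attains its unique global
maximum, with value 1, at the center `m`. -/
theorem unfis_gaussian_selected_center_preserved
    (m σ ς ε : ℝ) (hσ : 0 < σ) (hς : ς ∈ Set.Ioo (0 : ℝ) 1) (hε : 0 ≤ ε)
    (μ μp : ℝ → ℝ)
    (hμ : ∀ x, μ x = Real.exp (-(x - m) ^ 2 / (2 * σ ^ 2)))
    (hμp : ∀ x, μp x = (μ x + ε) / ((1 - ς) * μ x + ς + ε)) :
    μp m = 1 ∧ ∀ x, x ≠ m → μp x < 1 := by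
  obtain ⟨hς0, hς1⟩ := hς
  constructor
  · have hm : μ m = 1 := by simp [hμ]
    rw [hμp, hm]
    field_simp
    ring
  · intro x hx
    have hpos : 0 < μ x := by rw [hμ]; exact Real.exp_pos _
    have hlt : μ x < 1 := by
      rw [hμ]
      have : -(x - m) ^ 2 / (2 * σ ^ 2) < 0 := by
        apply div_neg_of_neg_of_pos
        · have : (x - m) ^ 2 > 0 := by have := sub_ne_zero.2 hx; positivity
          linarith
        · positivity
      calc Real.exp (-(x - m) ^ 2 / (2 * σ ^ 2)) < Real.exp 0 := Real.exp_lt_exp.2 this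
        _ = 1 := Real.exp_zero
    rw [hμp]
    have hden : 0 < (1 - ς) * μ x + ς + ε := by nlinarith
    rw [div_lt_one hden]
    nlinarith
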